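/- Let G be a group acting on a nonempty compact Hausdorff topological space X such that for every g ∈ G the translation map x ↦ g • x is continuous, and let E(X) be the enveloping semigroup of the flow. The set of almost periodic elements of E(X) is a right ideal: if f ∈ E(X) is almost periodic and g ∈ E(X), then f ∘ g belongs to E(X) and f ∘ g is almost periodic. -/
import Mathlib

open Set Function

/-- The enveloping semigroup of the `G`-flow `X`: the closure in `X → X` (product
topology) of the set of translation maps. -/
def envSemigroup (G X : Type*) [Group G] [MulAction G X] [TopologicalSpace X] :
    Set (X → X) :=
  closure {e : X → X | ∃ g : G, e = fun x => g • x}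

/-- Closure of the `G`-orbit of `f : X → X` under left translation. -/
def funOrbitClosure (G : Type*) {X : Type*} [Group G] [MulAction G X]
    [TopologicalSpace X] (f : X → X) : Set (X → X) :=
  closure {e : X → X | ∃ h : G, e = (fun x => h • x) ∘ f}

/-- A subflow of the function space `X → X` under the `G`-action
`h • e = (fun x => h • x) ∘ e`. -/
def IsFunSubflow (G : Type*) {X : Type*} [Group G] [MulAction G X]
    [TopologicalSpace X] (M : Set (X → X)) : Prop :=
  M.Nonempty ∧ IsClosed M ∧ ∀ h : G, ∀ e ∈ M, ((fun x => h • x) ∘ e) ∈ M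

/-- `f` is almost periodic if the closure of its `G`-orbit is a minimal subflow. -/
def IsAlmostPeriodicFun (G : Type*) {X : Type*} [Group G] [MulAction G X]
    [TopologicalSpace X] (f : X → X) : Prop :=
  IsFunSubflow G (funOrbitClosure G f) ∧
    ∀ M ⊆ funOrbitClosure G f, IsFunSubflow G M → M = funOrbitClosure G f

section Aux

variable {G X : Type*} [Group G] [MulAction G X] [TopologicalSpace X]

/-- Left composition with a translation is continuous. -/
lemma contL (hcont : ∀ g : G, Continuous fun x : X => g • x) (h : G) :
    Continuous fun e : X → X => (fun x => h • x) ∘ e :=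
  continuous_pi fun x => (hcont h).comp (continuous_apply x)

/-- Right composition with any map is continuous (product topology). -/
lemma contR (g : X → X) : Continuous fun e : X → X => e ∘ g :=
  continuous_pi fun x => continuous_apply (g x)

lemma self_mem_funOrbitClosure (f : X → X) : f ∈ funOrbitClosure G f :=
  subset_closure ⟨1, by funext x; simp⟩

lemma funOrbitClosure_subflow (hcont : ∀ g : G, Continuous fun x : X => g • x)
    (f : X → X) : IsFunSubflow G (funOrbitClosure G f) := by
  refine ⟨⟨f, self_mem_funOrbitClosure f⟩, isClosed_closure, ?_⟩
  intro h e he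
  have h1 := image_closure_subset_closure_image
    (s := {e : X → X | ∃ k : G, e = (fun x => k • x) ∘ f}) (contL hcont h)
  have h2 : (fun e : X → X => (fun x => h • x) ∘ e) ''
      {e : X → X | ∃ k : G, e = (fun x => k • x) ∘ f} ⊆
      {e : X → X | ∃ k : G, e = (fun x => k • x) ∘ f} := by
    rintro _ ⟨_, ⟨k, rfl⟩, rfl⟩
    exact ⟨h * k, by funext x; simp [mul_smul]⟩
  exact closure_mono h2 (h1 ⟨e, he, rfl⟩)

end Aux

/-- The almost periodic elements of the enveloping semigroup form a right ideal. -/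
theorem almostPeriodic_rightIdeal
    {G X : Type*} [Group G] [MulAction G X]
    [TopologicalSpace X] [CompactSpace X] [T2Space X] [Nonempty X]
    (hcont : ∀ g : G, Continuous fun x : X => g • x)
    (f : X → X) (hf : f ∈ envSemigroup G X) (hap : IsAlmostPeriodicFun G f)
    (g : X → X) (hg : g ∈ envSemigroup G X) :
    f ∘ g ∈ envSemigroup G X ∧ IsAlmostPeriodicFun G (f ∘ g) := by
  have hEclosed : IsClosed (envSemigroup G X) := isClosed_closure
  -- translations composed with g stay in the enveloping semigroup
  have hLmem : ∀ h : G, ((fun x => h • x) ∘ g) ∈ envSemigroup G X := by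
    intro h
    have h1 := image_closure_subset_closure_image
      (s := {e : X → X | ∃ k : G, e = fun x => k • x}) (contL hcont h)
    have h2 : (fun e : X → X => (fun x => h • x) ∘ e) ''
        {e : X → X | ∃ k : G, e = fun x => k • x} ⊆
        {e : X → X | ∃ k : G, e = fun x => k • x} := by
      rintro _ ⟨_, ⟨k, rfl⟩, rfl⟩
      exact ⟨h * k, by funext x; simp [mul_smul]⟩
    exact closure_mono h2 (h1 ⟨g, hg, rfl⟩)
  -- f ∘ g ∈ E(X)
  have hfg : f ∘ g ∈ envSemigroup G X := by
    have h1 := image_closure_subset_closure_image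
      (s := {e : X → X | ∃ k : G, e = fun x => k • x}) (contR g)
    have h2 : (fun e : X → X => e ∘ g) '' {e : X → X | ∃ k : G, e = fun x => k • x}
        ⊆ envSemigroup G X := by
      rintro _ ⟨_, ⟨k, rfl⟩, rfl⟩
      exact hLmem k
    exact closure_minimal h2 hEclosed (h1 ⟨f, hf, rfl⟩)
  refine ⟨hfg, funOrbitClosure_subflow hcont _, ?_⟩
  -- O(f∘g) ⊆ (·∘g) '' O(f)
  have hsub2 : funOrbitClosure G (f ∘ g) ⊆ (fun e : X → X => e ∘ g) '' funOrbitClosure G f := by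
    have hcpt : IsCompact (funOrbitClosure G f) :=
      (isClosed_closure (s := {e : X → X | ∃ h : G, e = (fun x => h • x) ∘ f})).isCompact
    have himg : IsClosed ((fun e : X → X => e ∘ g) '' funOrbitClosure G f) :=
      (hcpt.image (contR g)).isClosed
    refine closure_minimal ?_ himg
    rintro _ ⟨h, rfl⟩
    exact ⟨(fun x => h • x) ∘ f, subset_closure ⟨h, rfl⟩, rfl⟩
  intro M hM hMflow
  obtain ⟨m, hm⟩ := hMflow.1
  obtain ⟨e, heO, heg⟩ := hsub2 (hM hm)
  set N : Set (X → X) := funOrbitClosure G f ∩ (fun e : X → X => e ∘ g) ⁻¹' M with hNdef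
  have hNflow : IsFunSubflow G N := by
    refine ⟨⟨e, heO, ?_⟩, isClosed_closure.inter (hMflow.2.1.preimage (contR g)), ?_⟩
    · show (fun e : X → X => e ∘ g) e ∈ M
      rw [heg]; exact hm
    · rintro h e' ⟨he'O, he'M⟩
      exact ⟨hap.1.2.2 h e' he'O, hMflow.2.2 h (e' ∘ g) he'M⟩
  have hNeq : N = funOrbitClosure G f := hap.2 N inter_subset_left hNflow
  have hfN : f ∈ N := hNeq ▸ self_mem_funOrbitClosure f
  have hfgM : f ∘ g ∈ M := hfN.2
  have hOM : funOrbitClosure G (f ∘ g) ⊆ M := by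
    refine closure_minimal ?_ hMflow.2.1
    rintro _ ⟨h, rfl⟩
    exact hMflow.2.2 h (f ∘ g) hfgM
  exact Subset.antisymm hM hOM
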